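/- arXiv:1206.6216 — 2 statements merged into one kernel-verified Lean document; each statement's English description precedes it below -/
import Mathlib

section
/- Let μ be a finite Borel measure on S² with μ(S² \ {e₃, −e₃}) > 0. Then the function τ ↦ ∫_{S²} ⟨G_τ(p), e₃⟩ dμ(p) is strictly decreasing on (0, ∞). -/
/-!
STATEMENT 6: Let μ be a finite Borel measure on S² with μ(S² \ {e₃, −e₃}) > 0.
Then `τ ↦ ∫_{S²} ⟨G_τ(p), e₃⟩ dμ(p)` is strictly decreasing on (0,∞).
-/

noncomputable section

open Metric MeasureTheory
open scoped RealInnerProductSpace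

/-- ℝ³ with the Euclidean norm. -/
abbrev E3 : Type := EuclideanSpace ℝ (Fin 3)

/-- Constructor for points of ℝ³. -/
def mk3 (a b c : ℝ) : E3 := (WithLp.equiv 2 (Fin 3 → ℝ)).symm ![a, b, c]

/-- The north pole `e₃ = (0,0,1)`. -/
def e3 : E3 := mk3 0 0 1

/-- The proper conformal transformation `G_τ` of the sphere. -/
def Gmap (τ : ℝ) (p : E3) : E3 :=
  ((1 + p 2) + τ ^ 2 * (1 - p 2))⁻¹ •
    mk3 (2 * τ * p 0) (2 * τ * p 1) ((1 + p 2) - τ ^ 2 * (1 - p 2))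

/-- The relevant scalar function. -/
def Fz (τ z : ℝ) : ℝ := ((1 + z) - τ ^ 2 * (1 - z)) / ((1 + z) + τ ^ 2 * (1 - z))

lemma inner_Gmap_e3 (τ : ℝ) (p : E3) : ⟪Gmap τ p, e3⟫ = Fz τ (p 2) := by
  simp [Gmap, e3, mk3, Fz, PiLp.inner_apply, Fin.sum_univ_three, WithLp.equiv_symm_apply, PiLp.toLp_apply,
    div_eq_inv_mul]

lemma denom_pos {τ z : ℝ} (hτ : 0 < τ) (hz1 : -1 ≤ z) (hz2 : z ≤ 1) :
    0 < (1 + z) + τ ^ 2 * (1 - z) := by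
  rcases eq_or_lt_of_le hz1 with h | h
  · rw [← h]; nlinarith [pow_pos hτ 2]
  · nlinarith [mul_nonneg (sq_nonneg τ) (show (0:ℝ) ≤ 1 - z by linarith)]

lemma Fz_anti {z : ℝ} (hz1 : -1 ≤ z) (hz2 : z ≤ 1) {s t : ℝ} (hs : 0 < s) (ht : 0 < t)
    (hst : s < t) : Fz t z ≤ Fz s z := by
  have hds := denom_pos hs hz1 hz2
  have hdt := denom_pos ht hz1 hz2
  rw [Fz, Fz, div_le_div_iff₀ hdt hds]
  have hT : (0:ℝ) ≤ t ^ 2 - s ^ 2 := by nlinarith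
  nlinarith [mul_nonneg (mul_nonneg (show (0:ℝ) ≤ 1 + z by linarith)
    (show (0:ℝ) ≤ 1 - z by linarith)) hT]

lemma Fz_strictAnti {z : ℝ} (hz1 : -1 < z) (hz2 : z < 1) {s t : ℝ} (hs : 0 < s) (ht : 0 < t)
    (hst : s < t) : Fz t z < Fz s z := by
  have hds := denom_pos hs hz1.le hz2.le
  have hdt := denom_pos ht hz1.le hz2.le
  rw [Fz, Fz, div_lt_div_iff₀ hdt hds]
  have hT : (0:ℝ) < t ^ 2 - s ^ 2 := by nlinarith
  nlinarith [mul_pos (mul_pos (show (0:ℝ) < 1 + z by linarith)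
    (show (0:ℝ) < 1 - z by linarith)) hT]

lemma coord_sq (p : sphere (0 : E3) 1) :
    (p : E3) 0 ^ 2 + (p : E3) 1 ^ 2 + (p : E3) 2 ^ 2 = 1 := by
  have h : ‖(p : E3)‖ = 1 := by simpa using mem_sphere_zero_iff_norm.mp p.2
  have h2 : ‖(p : E3)‖ ^ 2 = 1 := by rw [h]; norm_num
  rw [EuclideanSpace.norm_eq] at h2
  rw [Real.sq_sqrt (by positivity)] at h2
  simpa [Fin.sum_univ_three] using h2

lemma z_mem (p : sphere (0 : E3) 1) : -1 ≤ (p : E3) 2 ∧ (p : E3) 2 ≤ 1 := by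
  have := coord_sq p
  constructor <;> nlinarith [sq_nonneg ((p : E3) 0), sq_nonneg ((p : E3) 1)]

lemma z_lt (p : sphere (0 : E3) 1) (h1 : (p : E3) ≠ e3) (h2 : (p : E3) ≠ -e3) :
    -1 < (p : E3) 2 ∧ (p : E3) 2 < 1 := by
  have hsq := coord_sq p
  have hz := z_mem p
  constructor
  · rcases lt_or_eq_of_le hz.1 with h | h
    · exact h
    · exfalso; apply h2
      have h0 : (p : E3) 0 = 0 := by nlinarith [sq_nonneg ((p : E3) 0), sq_nonneg ((p : E3) 1)]
      have h1' : (p : E3) 1 = 0 := by nlinarith [sq_nonneg ((p : E3) 0), sq_nonneg ((p : E3) 1)]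
      ext i
      fin_cases i <;> simp [e3, mk3, h0, h1', ← h, WithLp.equiv_symm_apply, PiLp.toLp_apply]
  · rcases lt_or_eq_of_le hz.2 with h | h
    · exact h
    · exfalso; apply h1
      have h0 : (p : E3) 0 = 0 := by nlinarith [sq_nonneg ((p : E3) 0), sq_nonneg ((p : E3) 1)]
      have h1' : (p : E3) 1 = 0 := by nlinarith [sq_nonneg ((p : E3) 0), sq_nonneg ((p : E3) 1)]
      ext i
      fin_cases i <;> simp [e3, mk3, h0, h1', h, WithLp.equiv_symm_apply, PiLp.toLp_apply]

lemma cont_Fz (τ : ℝ) (hτ : 0 < τ) :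
    Continuous fun p : sphere (0 : E3) 1 => Fz τ ((p : E3) 2) := by
  have hz : Continuous fun p : sphere (0 : E3) 1 => (p : E3) 2 :=
    (continuous_apply 2).comp (by fun_prop : Continuous fun p : sphere (0 : E3) 1 => (p : E3).ofLp)
  apply Continuous.div
  · exact (continuous_const.add hz).sub (continuous_const.mul (continuous_const.sub hz))
  · exact (continuous_const.add hz).add (continuous_const.mul (continuous_const.sub hz))
  · intro p
    have := denom_pos hτ (z_mem p).1 (z_mem p).2
    positivity

theorem stmt_6 (μ : Measure (sphere (0 : E3) 1)) [IsFiniteMeasure μ]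
    (hμ : 0 < μ {p : sphere (0 : E3) 1 | (p : E3) ≠ e3 ∧ (p : E3) ≠ -e3}) :
    StrictAntiOn (fun τ : ℝ => ∫ p : sphere (0 : E3) 1, ⟪Gmap τ (p : E3), e3⟫ ∂μ)
      (Set.Ioi 0) := by
  intro s hs t ht hst
  simp only [Set.mem_Ioi] at hs ht
  have hrw : ∀ τ, (∫ p : sphere (0 : E3) 1, ⟪Gmap τ (p : E3), e3⟫ ∂μ)
      = ∫ p : sphere (0 : E3) 1, Fz τ ((p : E3) 2) ∂μ := by
    intro τ; congr 1; funext p; exact inner_Gmap_e3 τ _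
  simp only [hrw]
  have hint : ∀ τ : ℝ, 0 < τ →
      Integrable (fun p : sphere (0 : E3) 1 => Fz τ ((p : E3) 2)) μ :=
    fun τ hτ => (cont_Fz τ hτ).integrable_of_hasCompactSupport
      (HasCompactSupport.of_compactSpace _)
  have key : 0 < ∫ p : sphere (0 : E3) 1,
      (Fz s ((p : E3) 2) - Fz t ((p : E3) 2)) ∂μ := by
    rw [integral_pos_iff_support_of_nonneg]
    · refine lt_of_lt_of_le hμ (measure_mono ?_)
      intro p hp
      have hzp := z_lt p hp.1 hp.2
      have := Fz_strictAnti hzp.1 hzp.2 hs ht hst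
      simp only [Function.mem_support]
      intro h
      linarith [sub_eq_zero.mp h ▸ this]
    · intro p
      have hzp := z_mem p
      have := Fz_anti hzp.1 hzp.2 hs ht hst
      simp only [Pi.zero_apply]
      linarith
    · exact (hint s hs).sub (hint t ht)
  have := integral_sub (hint s hs) (hint t ht)
  rw [this] at key
  linarith
end
end

section
/- (Key step in the uniqueness part of Theorem 1.) Let ψ : S² → ℝ be continuous and strictly positive with vanishing barycenter, ∫_{S²} p ψ(p) dσ(p) = 0. If τ > 0 is such that ∫_{S²} G_τ(p) ψ(p) dσ(p) = 0, then τ = 1; i.e. no nontrivial proper conformal transformation maps an equilibrated conformal factor to an equilibrated one. -/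
/-!
STATEMENT 12 (key step of the uniqueness part of Theorem 1): Let ψ : S² → ℝ be
continuous and strictly positive with vanishing barycenter
`∫_{S²} p ψ(p) dσ(p) = 0`.  If τ > 0 is such that `∫_{S²} G_τ(p) ψ(p) dσ(p) = 0`,
then τ = 1.
-/

noncomputable section

open Metric MeasureTheory

/-- The round surface measure on the unit sphere S² ⊂ ℝ³ (total mass 4π). -/
def sphMeasure : Measure (sphere (0 : E3) 1) :=
  (volume : Measure E3).toSphere

open Pointwise

instance : IsFiniteMeasure sphMeasure := by
  unfold sphMeasure; infer_instance

lemma mk3_apply2 (a b c : ℝ) : mk3 a b c 2 = c := by simp [mk3]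

@[fun_prop]
lemma cont_coord (i : Fin 3) : Continuous (fun p : sphere (0 : E3) 1 => (p : E3) i) :=
  (EuclideanSpace.proj i).continuous.comp continuous_subtype_val

lemma sum_sq_of_sphere (v : E3) (h : ‖v‖ = 1) : v 0^2 + v 1^2 + v 2^2 = 1 := by
  have hn := EuclideanSpace.norm_eq v
  rw [h] at hn
  have h2 := congrArg (·^2) hn
  simp [Fin.sum_univ_three] at h2
  rw [Real.sq_sqrt (by positivity)] at h2
  simpa [sq_abs] using h2.symm

lemma coord2_sq_le (v : E3) (h : ‖v‖ = 1) : v 2 ^ 2 ≤ 1 := by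
  nlinarith [sum_sq_of_sphere v h, sq_nonneg (v 0), sq_nonneg (v 1)]

lemma Dpos {τ z : ℝ} (hτ : 0 < τ) (h1 : -1 ≤ z) (h2 : z ≤ 1) :
    0 < (1 + z) + τ ^ 2 * (1 - z) := by
  rcases eq_or_lt_of_le h1 with h | h
  · nlinarith
  · nlinarith

lemma continuous_mk3 {X : Type*} [TopologicalSpace X] {f g h : X → ℝ}
    (hf : Continuous f) (hg : Continuous g) (hh : Continuous h) :
    Continuous (fun p => mk3 (f p) (g p) (h p)) := by
  unfold mk3
  refine Continuous.comp (PiLp.continuous_toLp 2 (fun _ : Fin 3 => ℝ)) ?_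
  refine continuous_pi ?_
  intro i
  fin_cases i <;> simpa

lemma integrable_of_cont {f : sphere (0 : E3) 1 → ℝ} (hf : Continuous f) :
    Integrable f sphMeasure :=
  hf.integrable_of_hasCompactSupport
    (IsCompact.of_isClosed_subset isCompact_univ (isClosed_tsupport _) (Set.subset_univ _))

-- measure of the polar set is zero
lemma meas_poles : sphMeasure {p : sphere (0 : E3) 1 | ((p : E3) 2)^2 = 1} = 0 := by
  have hmeas : MeasurableSet {p : sphere (0 : E3) 1 | ((p : E3) 2)^2 = 1} := by
    have hc : Continuous (fun p : sphere (0 : E3) 1 => ((p : E3) 2)^2) := by fun_prop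
    exact hc.measurable (measurableSet_singleton (1:ℝ))
  rw [sphMeasure, Measure.toSphere_apply' _ hmeas]
  have hsub : (Subtype.val '' {p : sphere (0 : E3) 1 | ((p : E3) 2)^2 = 1} : Set E3)
      ⊆ {mk3 0 0 1, mk3 0 0 (-1)} := by
    rintro v ⟨p, hp, rfl⟩
    have hn : ‖(p : E3)‖ = 1 := by
      have := p.2; simpa [mem_sphere_iff_norm] using this
    have hsum := sum_sq_of_sphere _ hn
    have h2 : ((p : E3) 2)^2 = 1 := hp
    have h0 : (p : E3) 0 = 0 := by nlinarith [sq_nonneg ((p:E3) 0), sq_nonneg ((p:E3) 1)]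
    have h1 : (p : E3) 1 = 0 := by nlinarith [sq_nonneg ((p:E3) 0), sq_nonneg ((p:E3) 1)]
    have hmul : ((p : E3) 2 - 1) * ((p : E3) 2 + 1) = 0 := by nlinarith
    rcases mul_eq_zero.mp hmul with h | h
    · left
      ext i
      fin_cases i <;> simp [mk3, h0, h1, show (p:E3) 2 = 1 by linarith]
    · right
      show (p : E3) = mk3 0 0 (-1)
      ext i
      fin_cases i <;> simp [mk3, h0, h1, show (p:E3) 2 = -1 by linarith]
  have hline : ∀ v : E3, volume (Set.Ioo (0:ℝ) 1 • ({v} : Set E3)) = 0 := by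
    intro v
    have hspan : (Submodule.span ℝ ({v} : Set E3)) ≠ ⊤ := by
      refine (Submodule.lt_top_of_finrank_lt_finrank ?_).ne
      calc Module.finrank ℝ (Submodule.span ℝ ({v} : Set E3)) ≤ 1 := by
            simpa using finrank_span_le_card ({v} : Set E3)
        _ < Module.finrank ℝ E3 := by simp [finrank_euclideanSpace]
    refine measure_mono_null ?_ (Measure.addHaar_submodule volume _ hspan)
    rintro x ⟨r, hr, y, hy, rfl⟩
    simp only [Set.mem_singleton_iff] at hy
    rw [hy]
    exact Submodule.smul_mem _ r (Submodule.mem_span_singleton_self v)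
  refine mul_eq_zero_of_right _ ?_
  refine measure_mono_null (Set.smul_subset_smul_left hsub) ?_
  have hsplit : Set.Ioo (0:ℝ) 1 • ({mk3 0 0 1, mk3 0 0 (-1)} : Set E3)
      = Set.Ioo (0:ℝ) 1 • ({mk3 0 0 1} : Set E3)
        ∪ Set.Ioo (0:ℝ) 1 • ({mk3 0 0 (-1)} : Set E3) := by
    rw [Set.insert_eq, Set.smul_union]
  rw [hsplit]
  exact le_antisymm (le_trans (measure_union_le _ _) (by rw [hline, hline, add_zero])) bot_le

theorem stmt_12 (ψ : sphere (0 : E3) 1 → ℝ) (hψc : Continuous ψ)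
    (hψpos : ∀ p, 0 < ψ p)
    (hbar : ∫ p : sphere (0 : E3) 1, ψ p • (p : E3) ∂sphMeasure = 0)
    (τ : ℝ) (hτ : 0 < τ)
    (hbarτ : ∫ p : sphere (0 : E3) 1, ψ p • Gmap τ (p : E3) ∂sphMeasure = 0) :
    τ = 1 := by
  by_contra hne
  have hnorm : ∀ p : sphere (0 : E3) 1, ‖(p : E3)‖ = 1 := by
    intro p; have := p.2; simpa [mem_sphere_iff_norm] using this
  have hzle : ∀ p : sphere (0 : E3) 1, -1 ≤ (p : E3) 2 ∧ (p : E3) 2 ≤ 1 := by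
    intro p
    constructor <;> nlinarith [coord2_sq_le _ (hnorm p)]
  have hD : ∀ p : sphere (0 : E3) 1,
      0 < (1 + (p : E3) 2) + τ ^ 2 * (1 - (p : E3) 2) := fun p =>
    Dpos hτ (hzle p).1 (hzle p).2
  -- integrabilities
  have hint1 : Integrable (fun p : sphere (0 : E3) 1 => ψ p • (p : E3)) sphMeasure :=
    (hψc.smul continuous_subtype_val).integrable_of_hasCompactSupport
      (IsCompact.of_isClosed_subset isCompact_univ (isClosed_tsupport _) (Set.subset_univ _))
  have hcontG : Continuous (fun p : sphere (0 : E3) 1 => Gmap τ (p : E3)) := by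
    unfold Gmap
    refine Continuous.fun_smul ?_ (continuous_mk3 (f := fun p : sphere (0 : E3) 1 => 2 * τ * (p : E3) 0)
      (g := fun p : sphere (0 : E3) 1 => 2 * τ * (p : E3) 1)
      (h := fun p : sphere (0 : E3) 1 => (1 + (p : E3) 2) - τ ^ 2 * (1 - (p : E3) 2))
      (by fun_prop) (by fun_prop) (by fun_prop))
    exact ((by fun_prop : Continuous (fun p : sphere (0 : E3) 1 =>
      (1 + (p:E3) 2) + τ^2 * (1 - (p:E3) 2))).inv₀ (fun p => (hD p).ne'))
  have hint2 : Integrable (fun p : sphere (0 : E3) 1 => ψ p • Gmap τ (p : E3)) sphMeasure :=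
    (hψc.smul hcontG).integrable_of_hasCompactSupport
      (IsCompact.of_isClosed_subset isCompact_univ (isClosed_tsupport _) (Set.subset_univ _))
  -- third coordinates
  have h3 : ∫ p : sphere (0 : E3) 1, ψ p * (p : E3) 2 ∂sphMeasure = 0 := by
    have h := ((EuclideanSpace.proj (2 : Fin 3) : E3 →L[ℝ] ℝ).integral_comp_comm hint1)
    rw [hbar] at h
    simpa [smul_eq_mul] using h
  have hG2 : ∀ p : sphere (0 : E3) 1, Gmap τ (p : E3) 2
      = ((1 + (p:E3) 2) + τ^2 * (1 - (p:E3) 2))⁻¹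
        * ((1 + (p:E3) 2) - τ^2 * (1 - (p:E3) 2)) := by
    intro p
    simp [Gmap, PiLp.smul_apply, mk3_apply2, smul_eq_mul]
  have h4 : ∫ p : sphere (0 : E3) 1, ψ p * Gmap τ (p : E3) 2 ∂sphMeasure = 0 := by
    have h := ((EuclideanSpace.proj (2 : Fin 3) : E3 →L[ℝ] ℝ).integral_comp_comm hint2)
    rw [hbarτ] at h
    simpa [smul_eq_mul] using h
  -- the nonnegative function
  set F : sphere (0 : E3) 1 → ℝ := fun p =>
    ψ p * ((1 - ((p:E3) 2)^2) / ((1 + (p:E3) 2) + τ^2 * (1 - (p:E3) 2))) with hF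
  have hFcont : Continuous F :=
    hψc.mul (Continuous.div (by fun_prop) (by fun_prop) (fun p => (hD p).ne'))
  have hFint : Integrable F sphMeasure := integrable_of_cont hFcont
  have hFnonneg : 0 ≤ F := by
    intro p
    have h1 := (hzle p).1
    have h2 := (hzle p).2
    have hnn : 0 ≤ 1 - ((p:E3) 2)^2 := by nlinarith
    exact mul_nonneg (hψpos p).le (div_nonneg hnn (hD p).le)
  -- pointwise identity
  have hkey : ∀ p : sphere (0 : E3) 1,
      ψ p * ((p:E3) 2 - Gmap τ (p:E3) 2) = (τ^2 - 1) * F p := by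
    intro p
    rw [hG2 p, hF]
    have hDne := (hD p).ne'
    field_simp
    ring
  -- integral of F is zero
  have hzero : (τ^2 - 1) * ∫ p : sphere (0 : E3) 1, F p ∂sphMeasure = 0 := by
    rw [← integral_const_mul]
    have hfe : (fun p : sphere (0 : E3) 1 => (τ^2 - 1) * F p)
        = fun p => ψ p * (p:E3) 2 - ψ p * Gmap τ (p:E3) 2 := by
      funext p; rw [← hkey p]; ring
    rw [hfe]
    have i1 : Integrable (fun p : sphere (0 : E3) 1 => ψ p * (p:E3) 2) sphMeasure :=
      integrable_of_cont (hψc.mul (by fun_prop))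
    have i2 : Integrable (fun p : sphere (0 : E3) 1 => ψ p * Gmap τ (p:E3) 2) sphMeasure := by
      refine integrable_of_cont (hψc.mul ?_)
      exact (EuclideanSpace.proj (2 : Fin 3)).continuous.comp hcontG
    rw [integral_sub i1 i2, h3, h4, sub_zero]
  have hτ2 : τ^2 - 1 ≠ 0 := by
    intro h
    have hmul : (τ - 1) * (τ + 1) = 0 := by nlinarith
    rcases mul_eq_zero.mp hmul with h' | h'
    · exact hne (by linarith)
    · linarith
  have hFzero : ∫ p : sphere (0 : E3) 1, F p ∂sphMeasure = 0 := by
    rcases mul_eq_zero.mp hzero with h | h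
    · exact absurd h hτ2
    · exact h
  -- F = 0 a.e.
  have hae : F =ᵐ[sphMeasure] 0 := by
    rw [← integral_eq_zero_iff_of_nonneg hFnonneg hFint]
    exact hFzero
  have hsubset : {p : sphere (0 : E3) 1 | ((p:E3) 2)^2 ≠ 1}
      ⊆ {p : sphere (0 : E3) 1 | ¬ F p = (0 : sphere (0 : E3) 1 → ℝ) p} := by
    intro p hp
    simp only [Set.mem_setOf_eq, Pi.zero_apply]
    have h1 := (hzle p).1
    have h2 := (hzle p).2
    have hlt : ((p:E3) 2)^2 < 1 := lt_of_le_of_ne (coord2_sq_le _ (hnorm p)) hp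
    have hgt : 0 < 1 - ((p:E3) 2)^2 := by linarith
    exact (mul_pos (hψpos p) (div_pos hgt (hD p))).ne'
  have hmzero : sphMeasure {p : sphere (0 : E3) 1 | ((p:E3) 2)^2 ≠ 1} = 0 :=
    measure_mono_null hsubset (ae_iff.mp hae)
  have htot : sphMeasure Set.univ
      ≤ sphMeasure {p : sphere (0 : E3) 1 | ((p:E3) 2)^2 = 1}
        + sphMeasure {p : sphere (0 : E3) 1 | ((p:E3) 2)^2 ≠ 1} := by
    refine le_trans (measure_mono ?_) (measure_union_le _ _)
    intro p _
    by_cases h : ((p:E3) 2)^2 = 1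
    · exact Or.inl h
    · exact Or.inr h
  rw [meas_poles, hmzero, add_zero] at htot
  have huniv : sphMeasure (Set.univ : Set (sphere (0 : E3) 1)) = 0 := le_antisymm htot bot_le
  have hpos : sphMeasure (Set.univ : Set (sphere (0 : E3) 1)) ≠ 0 := by
    rw [sphMeasure, Measure.toSphere_apply_univ]
    refine mul_ne_zero ?_ (measure_ball_pos volume (0:E3) one_pos).ne'
    simp [finrank_euclideanSpace]
  exact hpos huniv
end
end
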